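/- Let QFT be the exact quantum Fourier transform on n qubits and QFT' the blockwise approximate QFT with block size m (which, for each block i of m qubits, applies the phase e^{2πi(X_i + X_{i+1}/2^m)Y_i/2^m} instead of the full phase e^{2πi(Σ_{j≥i} X_j/2^{m(j−i)})Y_i/2^m}). Then (1/2^n)‖QFT' − QFT‖_F² ≤ (4π²/3) · ⌈n/m⌉ · 2^{−m}. -/

import Mathlib

open Finset Complex

/-- Exact blockwise QFT amplitude: for input block values `X` and output block values
`Y` (each block is an `m`-bit integer), the amplitude of `|Y⟩` in `QFT|X⟩` is
`∏_i 2^{-m/2} e^{2πi (∑_{j≥i} X_j 2^{-m(j-i)}) Y_i / 2^m}`. -/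
noncomputable def qftBlockAmp (m K : ℕ) (X Y : Fin K → Fin (2 ^ m)) : ℂ :=
  ∏ i : Fin K,
    ((1 / Real.sqrt (2 ^ m) : ℝ) *
      Complex.exp (2 * Real.pi * Complex.I *
        (∑ j ∈ Finset.Ico (i : ℕ) K,
          if h : j < K then ((X ⟨j, h⟩ : ℕ) : ℝ) / 2 ^ (m * (j - (i : ℕ))) else 0) *
        (Y i : ℕ) / 2 ^ m))

/-- Blockwise approximate QFT amplitude: only the terms `X_i + X_{i+1}/2^m` of the
phase are kept (`X_j = 0` for out-of-range `j`). -/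
noncomputable def aqftBlockAmp (m K : ℕ) (X Y : Fin K → Fin (2 ^ m)) : ℂ :=
  ∏ i : Fin K,
    ((1 / Real.sqrt (2 ^ m) : ℝ) *
      Complex.exp (2 * Real.pi * Complex.I *
        (((X i : ℕ) : ℝ) +
          (if h : (i : ℕ) + 1 < K then ((X ⟨(i : ℕ) + 1, h⟩ : ℕ) : ℝ) else 0) / 2 ^ m) *
        (Y i : ℕ) / 2 ^ m))

/-- The exact phase coefficient of block `i`. -/
noncomputable def sEx (m K : ℕ) (X : Fin K → Fin (2 ^ m)) (i : Fin K) : ℝ :=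
  ∑ j ∈ Finset.Ico (i : ℕ) K,
    if h : j < K then ((X ⟨j, h⟩ : ℕ) : ℝ) / 2 ^ (m * (j - (i : ℕ))) else 0

/-- The approximate phase coefficient of block `i`. -/
noncomputable def sAp (m K : ℕ) (X : Fin K → Fin (2 ^ m)) (i : Fin K) : ℝ :=
  ((X i : ℕ) : ℝ) +
    (if h : (i : ℕ) + 1 < K then ((X ⟨(i : ℕ) + 1, h⟩ : ℕ) : ℝ) else 0) / 2 ^ m

lemma norm_exp_mul_I_sub_one_le (t : ℝ) : ‖Complex.exp ((t : ℂ) * I) - 1‖ ≤ |t| := by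
  have h1 : ‖Complex.exp ((t:ℂ) * I) - 1‖ ^ 2 = 2 - 2 * Real.cos t := by
    rw [Complex.exp_mul_I]
    have h : (Complex.cos t + Complex.sin t * I - 1)
        = Complex.ofReal (Real.cos t - 1) + Complex.ofReal (Real.sin t) * I := by
      push_cast; ring
    rw [h, Complex.sq_norm, Complex.normSq_add_mul_I]
    nlinarith [Real.sin_sq_add_cos_sq t]
  have h2 : 2 - 2 * Real.cos t ≤ t ^ 2 := by
    have hs := Real.sin_sq_le_sq (x := t/2)
    have h3 : Real.sin (t/2) ^ 2 = 1/2 - Real.cos t / 2 := by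
      rw [Real.sin_sq_eq_half_sub]
      ring_nf
    nlinarith
  nlinarith [norm_nonneg (Complex.exp ((t:ℂ) * I) - 1), abs_nonneg t, _root_.sq_abs t]

lemma gen_amp_eq (m K : ℕ) (Y : Fin K → Fin (2 ^ m)) (s : Fin K → ℝ) :
    (∏ i : Fin K, (((1 / Real.sqrt (2 ^ m) : ℝ)) : ℂ) *
      Complex.exp (2 * Real.pi * Complex.I * (s i : ℂ) * ((Y i : ℕ) : ℂ) / 2 ^ m))
    = ((1 / Real.sqrt (2 ^ m) : ℝ) : ℂ) ^ K *
      Complex.exp ((↑(∑ i : Fin K, 2 * Real.pi * s i * (Y i : ℕ) / 2 ^ m) : ℂ) * I) := by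
  have h : ∀ i : Fin K,
      (2 * (Real.pi : ℂ) * Complex.I * (s i : ℂ) * ((Y i : ℕ) : ℂ) / 2 ^ m)
      = ((2 * Real.pi * s i * (Y i : ℕ) / 2 ^ m : ℝ) : ℂ) * I := by
    intro i; push_cast; ring
  simp only [h]
  rw [Finset.prod_mul_distrib, Finset.prod_const, Finset.card_univ, Fintype.card_fin,
    ← Complex.exp_sum]
  congr 1
  rw [Complex.ofReal_sum, Finset.sum_mul]

lemma qft_eq (m K : ℕ) (X Y : Fin K → Fin (2 ^ m)) :
    qftBlockAmp m K X Y = ((1 / Real.sqrt (2 ^ m) : ℝ) : ℂ) ^ K *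
      Complex.exp ((↑(∑ i : Fin K, 2 * Real.pi * sEx m K X i * (Y i : ℕ) / 2 ^ m) : ℂ) * I) := by
  rw [← gen_amp_eq m K Y (sEx m K X)]
  rfl

lemma aqft_eq (m K : ℕ) (X Y : Fin K → Fin (2 ^ m)) :
    aqftBlockAmp m K X Y = ((1 / Real.sqrt (2 ^ m) : ℝ) : ℂ) ^ K *
      Complex.exp ((↑(∑ i : Fin K, 2 * Real.pi * sAp m K X i * (Y i : ℕ) / 2 ^ m) : ℂ) * I) := by
  rw [← gen_amp_eq m K Y (sAp m K X)]
  unfold aqftBlockAmp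
  refine Finset.prod_congr rfl fun i _ => ?_
  congr 2
  unfold sAp
  push_cast
  ring

lemma geom_eq (N : ℝ) (hN : 0 < N) (M : ℕ) :
    ∑ k ∈ Finset.range M, (N - 1) / N ^ (k + 2) = 1 / N - 1 / N ^ (M + 1) := by
  induction M with
  | zero => simp
  | succ M ih =>
    rw [Finset.sum_range_succ, ih]
    have h1 : N ^ (M + 1) ≠ 0 := pow_ne_zero _ hN.ne'
    have h2 : N ^ (M + 2) ≠ 0 := pow_ne_zero _ hN.ne'
    field_simp
    ring

lemma sDiff (m K : ℕ) (X : Fin K → Fin (2 ^ m)) (i : Fin K) :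
    |sEx m K X i - sAp m K X i| ≤ 1 / 2 ^ m := by
  have hiK : (i : ℕ) < K := i.isLt
  have hN1 : (1 : ℝ) ≤ 2 ^ m := one_le_pow₀ (by norm_num)
  have hNpos : (0 : ℝ) < 2 ^ m := by positivity
  have tii : (i : ℕ) - (i : ℕ) = 0 := by omega
  by_cases h1 : (i : ℕ) + 1 < K
  · have ti1 : ((i : ℕ) + 1) - (i : ℕ) = 1 := by omega
    have e0 : sEx m K X i = ((X i : ℕ) : ℝ) + ((X ⟨(i : ℕ) + 1, h1⟩ : ℕ) : ℝ) / 2 ^ m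
        + ∑ j ∈ Finset.Ico ((i : ℕ) + 2) K,
            (if h : j < K then ((X ⟨j, h⟩ : ℕ) : ℝ) / 2 ^ (m * (j - (i : ℕ))) else 0) := by
      unfold sEx
      rw [Finset.sum_eq_sum_Ico_succ_bot hiK, Finset.sum_eq_sum_Ico_succ_bot h1,
        dif_pos hiK, dif_pos h1, tii, ti1, mul_zero, mul_one]
      simp [add_assoc]
    have e1 : sAp m K X i = ((X i : ℕ) : ℝ) + ((X ⟨(i : ℕ) + 1, h1⟩ : ℕ) : ℝ) / 2 ^ m := by
      unfold sAp; rw [dif_pos h1]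
    rw [e0, e1]
    have hterm_nonneg : ∀ j ∈ Finset.Ico ((i : ℕ) + 2) K,
        (0:ℝ) ≤ (if h : j < K then ((X ⟨j, h⟩ : ℕ) : ℝ) / 2 ^ (m * (j - (i : ℕ))) else 0) := by
      intro j _; split <;> positivity
    rw [add_sub_cancel_left, _root_.abs_of_nonneg (Finset.sum_nonneg hterm_nonneg)]
    have hle : ∀ j ∈ Finset.Ico ((i : ℕ) + 2) K,
        (if h : j < K then ((X ⟨j, h⟩ : ℕ) : ℝ) / 2 ^ (m * (j - (i : ℕ))) else 0)
          ≤ ((2:ℝ) ^ m - 1) / ((2:ℝ) ^ m) ^ (j - (i : ℕ)) := by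
      intro j hj
      split
      · next h =>
        rw [pow_mul]
        gcongr
        have hx : ((X ⟨j, h⟩ : ℕ) : ℕ) + 1 ≤ 2 ^ m := (X ⟨j, h⟩).isLt
        have hx' : ((X ⟨j, h⟩ : ℕ) : ℝ) + 1 ≤ (2:ℝ) ^ m := by exact_mod_cast hx
        linarith
      · apply div_nonneg (by linarith) (by positivity)
    have hre : ∑ j ∈ Finset.Ico ((i : ℕ) + 2) K, ((2:ℝ) ^ m - 1) / ((2:ℝ) ^ m) ^ (j - (i : ℕ))
        = ∑ k ∈ Finset.range (K - ((i : ℕ) + 2)), ((2:ℝ) ^ m - 1) / ((2:ℝ) ^ m) ^ (k + 2) := by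
      rw [Finset.sum_Ico_eq_sum_range]
      refine Finset.sum_congr rfl fun k _ => ?_
      congr 2
      omega
    calc ∑ j ∈ Finset.Ico ((i : ℕ) + 2) K,
            (if h : j < K then ((X ⟨j, h⟩ : ℕ) : ℝ) / 2 ^ (m * (j - (i : ℕ))) else 0)
        ≤ ∑ j ∈ Finset.Ico ((i : ℕ) + 2) K, ((2:ℝ) ^ m - 1) / ((2:ℝ) ^ m) ^ (j - (i : ℕ)) :=
          Finset.sum_le_sum hle
      _ = 1 / 2 ^ m - 1 / ((2:ℝ) ^ m) ^ (K - ((i : ℕ) + 2) + 1) := by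
          rw [hre, geom_eq _ hNpos]
      _ ≤ 1 / 2 ^ m := by
          have h0 : (0:ℝ) < ((2:ℝ) ^ m) ^ (K - ((i : ℕ) + 2) + 1) := by positivity
          have := le_of_lt (one_div_pos.mpr h0)
          linarith
  · have hK : Finset.Ico (i : ℕ) K = {(i : ℕ)} := by
      rw [← Nat.Ico_succ_singleton]
      congr 1
      omega
    have e0 : sEx m K X i = ((X i : ℕ) : ℝ) := by
      unfold sEx
      rw [hK, Finset.sum_singleton, dif_pos hiK, tii, mul_zero]
      simp
    have e1 : sAp m K X i = ((X i : ℕ) : ℝ) := by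
      unfold sAp; rw [dif_neg h1]; simp
    rw [e0, e1, sub_self, abs_zero]
    positivity

lemma key_pointwise (m K : ℕ) (X Y : Fin K → Fin (2 ^ m)) :
    ‖aqftBlockAmp m K X Y - qftBlockAmp m K X Y‖ ^ 2
      ≤ ((1:ℝ) / 2 ^ m) ^ K * (2 * (2 * Real.pi * K / 2 ^ m)) := by
  have hNpos : (0 : ℝ) < 2 ^ m := by positivity
  have hπ : (0:ℝ) < Real.pi := Real.pi_pos
  set A : ℝ := ∑ i : Fin K, 2 * Real.pi * sAp m K X i * (Y i : ℕ) / 2 ^ m with hA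
  set B : ℝ := ∑ i : Fin K, 2 * Real.pi * sEx m K X i * (Y i : ℕ) / 2 ^ m with hB
  rw [aqft_eq, qft_eq, ← mul_sub, norm_mul, norm_pow, mul_pow]
  have hc : ‖(((1 / Real.sqrt (2 ^ m) : ℝ)) : ℂ)‖ ^ 2 = (1:ℝ) / 2 ^ m := by
    rw [Complex.norm_real, Real.norm_eq_abs, _root_.abs_of_nonneg (by positivity), div_pow,
      one_pow, Real.sq_sqrt (le_of_lt hNpos)]
  rw [← pow_mul, mul_comm K 2, pow_mul, hc]
  gcongr ((1:ℝ)/2^m)^K * ?_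
  -- bound the phase difference
  have hsplit : Complex.exp ((A:ℂ) * I) - Complex.exp ((B:ℂ) * I)
      = Complex.exp ((B:ℂ) * I) * (Complex.exp ((↑(A - B):ℂ) * I) - 1) := by
    rw [mul_sub, mul_one, ← Complex.exp_add]
    congr 1
    push_cast
    ring
  rw [hsplit, norm_mul]
  have hB1 : ‖Complex.exp ((B:ℂ) * I)‖ = 1 := by
    rw [Complex.norm_exp_ofReal_mul_I]
  rw [hB1, one_mul]
  have hD2 : ‖Complex.exp ((↑(A - B):ℂ) * I) - 1‖ ≤ 2 := by
    calc ‖Complex.exp ((↑(A - B):ℂ) * I) - 1‖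
        ≤ ‖Complex.exp ((↑(A - B):ℂ) * I)‖ + ‖(1:ℂ)‖ := norm_sub_le _ _
      _ = 2 := by
          rw [Complex.norm_exp_ofReal_mul_I, norm_one]; norm_num
  have hDt : ‖Complex.exp ((↑(A - B):ℂ) * I) - 1‖ ≤ |A - B| := norm_exp_mul_I_sub_one_le _
  have hAB : |A - B| ≤ 2 * Real.pi * K / 2 ^ m := by
    rw [hA, hB, ← Finset.sum_sub_distrib]
    calc |∑ i : Fin K, (2 * Real.pi * sAp m K X i * (Y i : ℕ) / 2 ^ m
            - 2 * Real.pi * sEx m K X i * (Y i : ℕ) / 2 ^ m)|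
        ≤ ∑ i : Fin K, |2 * Real.pi * sAp m K X i * (Y i : ℕ) / 2 ^ m
            - 2 * Real.pi * sEx m K X i * (Y i : ℕ) / 2 ^ m| :=
          Finset.abs_sum_le_sum_abs _ _
      _ ≤ ∑ _i : Fin K, 2 * Real.pi / 2 ^ m := by
          refine Finset.sum_le_sum fun i _ => ?_
          have heq : 2 * Real.pi * sAp m K X i * (Y i : ℕ) / 2 ^ m
              - 2 * Real.pi * sEx m K X i * (Y i : ℕ) / 2 ^ m
              = 2 * Real.pi * ((sAp m K X i - sEx m K X i) * (Y i : ℕ)) / 2 ^ m := by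
            ring
          rw [heq, abs_div, abs_mul, abs_mul, abs_mul]
          have h2 : |(2:ℝ)| = 2 := by norm_num
          have hπa : |Real.pi| = Real.pi := _root_.abs_of_nonneg hπ.le
          have hpa : |(2:ℝ)^m| = 2^m := _root_.abs_of_nonneg hNpos.le
          rw [h2, hπa, hpa]
          have hYle : |((Y i : ℕ) : ℝ)| ≤ 2 ^ m := by
            rw [_root_.abs_of_nonneg (by positivity)]
            have := (Y i).isLt
            exact_mod_cast this.le
          have hsd : |sAp m K X i - sEx m K X i| ≤ 1 / 2 ^ m := by
            rw [abs_sub_comm]; exact sDiff m K X i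
          have hmain : |sAp m K X i - sEx m K X i| * |((Y i : ℕ) : ℝ)| ≤ 1 := by
            calc |sAp m K X i - sEx m K X i| * |((Y i : ℕ) : ℝ)|
                ≤ (1 / 2 ^ m) * 2 ^ m := by
                  exact mul_le_mul hsd hYle (abs_nonneg _) (by positivity)
              _ = 1 := by field_simp
          rw [div_le_div_iff₀ (by positivity) (by positivity)]
          calc 2 * Real.pi * (|sAp m K X i - sEx m K X i| * |((Y i : ℕ) : ℝ)|) * 2 ^ m
              ≤ 2 * Real.pi * 1 * 2 ^ m := by
                have h2π : (0:ℝ) ≤ 2 * Real.pi := by positivity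
                have := mul_le_mul_of_nonneg_left hmain h2π
                nlinarith
            _ = 2 * Real.pi * 2 ^ m := by ring
      _ = 2 * Real.pi * K / 2 ^ m := by
          rw [Finset.sum_const, Finset.card_univ, Fintype.card_fin, nsmul_eq_mul]
          ring
  have hnn : (0:ℝ) ≤ ‖Complex.exp ((↑(A - B):ℂ) * I) - 1‖ := norm_nonneg _
  calc ‖Complex.exp ((↑(A - B):ℂ) * I) - 1‖ ^ 2
      = ‖Complex.exp ((↑(A - B):ℂ) * I) - 1‖ * ‖Complex.exp ((↑(A - B):ℂ) * I) - 1‖ := sq _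
    _ ≤ 2 * (2 * Real.pi * K / 2 ^ m) :=
        mul_le_mul hD2 (hDt.trans hAB) hnn (by norm_num)

/-- For the exact QFT and the blockwise approximate QFT with block size
`m` on `n` qubits (divided into `K = n/m` blocks), the average squared Frobenius error
satisfies `(1/2^n) ‖QFT' − QFT‖_F² ≤ (4π²/3) ⌈n/m⌉ 2^{−m}`. -/
theorem stmt9 (n m : ℕ) (hm : 0 < m) (hmn : m ≤ n) (hdvd : m ∣ n) :
    (1 / (2 ^ n : ℝ)) *
      ∑ X : Fin (n / m) → Fin (2 ^ m), ∑ Y : Fin (n / m) → Fin (2 ^ m),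
        ‖aqftBlockAmp m (n / m) X Y - qftBlockAmp m (n / m) X Y‖ ^ 2 ≤
    (4 * Real.pi ^ 2 / 3) * (n / m : ℕ) * (1 / 2 ^ m : ℝ) := by
  have hmul : m * (n / m) = n := Nat.mul_div_cancel' hdvd
  have hNpos : (0 : ℝ) < 2 ^ m := by positivity
  have h2npos : (0 : ℝ) < 2 ^ n := by positivity
  have hπ := Real.pi_gt_three
  have hπ0 := Real.pi_pos
  have hcard : (Fintype.card (Fin (n / m) → Fin (2 ^ m)) : ℝ) = 2 ^ n := by
    rw [Fintype.card_fun, Fintype.card_fin, Fintype.card_fin, ← pow_mul, hmul]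
    norm_cast
  have h2n : ((1:ℝ) / 2 ^ m) ^ (n / m) = 1 / 2 ^ n := by
    rw [div_pow, one_pow, ← pow_mul, hmul]
  have hb0 : (0:ℝ) ≤ 2 * (2 * Real.pi * (n / m : ℕ) / 2 ^ m) := by positivity
  calc (1 / (2 ^ n : ℝ)) *
        ∑ X : Fin (n / m) → Fin (2 ^ m), ∑ Y : Fin (n / m) → Fin (2 ^ m),
          ‖aqftBlockAmp m (n / m) X Y - qftBlockAmp m (n / m) X Y‖ ^ 2
      ≤ (1 / (2 ^ n : ℝ)) *
        ∑ _X : Fin (n / m) → Fin (2 ^ m), ∑ _Y : Fin (n / m) → Fin (2 ^ m),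
          ((1:ℝ) / 2 ^ m) ^ (n / m) * (2 * (2 * Real.pi * (n / m : ℕ) / 2 ^ m)) := by
        apply mul_le_mul_of_nonneg_left ?_ (by positivity)
        refine Finset.sum_le_sum fun X _ => Finset.sum_le_sum fun Y _ => ?_
        exact key_pointwise m (n / m) X Y
    _ = (1 / (2 ^ n : ℝ)) * ((2:ℝ) ^ n * ((2:ℝ) ^ n *
          (((1:ℝ) / 2 ^ n) * (2 * (2 * Real.pi * (n / m : ℕ) / 2 ^ m))))) := by
        rw [Finset.sum_const, Finset.sum_const, Finset.card_univ, nsmul_eq_mul, nsmul_eq_mul,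
          hcard, h2n]
    _ = 4 * Real.pi * (n / m : ℕ) * (1 / 2 ^ m) := by
        field_simp
        ring
    _ ≤ (4 * Real.pi ^ 2 / 3) * (n / m : ℕ) * (1 / 2 ^ m : ℝ) := by
        have ht : (0:ℝ) ≤ ((n / m : ℕ) : ℝ) * (1 / 2 ^ m) := by positivity
        have hstep : 4 * Real.pi ≤ 4 * Real.pi ^ 2 / 3 := by nlinarith
        calc 4 * Real.pi * (n / m : ℕ) * (1 / 2 ^ m)
            = (4 * Real.pi) * (((n / m : ℕ) : ℝ) * (1 / 2 ^ m)) := by ring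
          _ ≤ (4 * Real.pi ^ 2 / 3) * (((n / m : ℕ) : ℝ) * (1 / 2 ^ m)) :=
              mul_le_mul_of_nonneg_right hstep ht
          _ = (4 * Real.pi ^ 2 / 3) * (n / m : ℕ) * (1 / 2 ^ m : ℝ) := by ring
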